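/- If M' is an acyclic matching on Δ' = Δ \ Δ_x and M_x is the canonical matching on Δ_x (pairing σ \ {x} with σ ∪ {x}), then M = M' ∪ M_x is an acyclic matching on Δ. -/

import Mathlib

/-- A partial matching `M` on a family `Δ` of faces (ordered by inclusion). -/
def IsPartialMatching {X : Type*} [DecidableEq X] (Δ : Set (Finset X))
    (M : Set (Finset X × Finset X)) : Prop :=
  (∀ p ∈ M, p.1 ∈ Δ ∧ p.2 ∈ Δ ∧ p.1 ⋖ p.2) ∧
  (∀ p ∈ M, ∀ q ∈ M,
    (p.1 = q.1 ∨ p.1 = q.2 ∨ p.2 = q.1 ∨ p.2 = q.2) → p = q)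

/-- An alternating cycle `a₁ ≺ u(a₁) ≻ a₂ ≺ ⋯ ≺ u(a_m) ≻ a₁`, `m ≥ 2`, distinct `aᵢ`. -/
def HasCycle {X : Type*} [DecidableEq X] (M : Set (Finset X × Finset X)) : Prop :=
  ∃ m : ℕ, ∃ a b : Fin (m + 2) → Finset X,
    Function.Injective a ∧ (∀ i, (a i, b i) ∈ M) ∧ ∀ i, a (i + 1) ⋖ b i

/-- If `M'` is an acyclic matching on `Δ' = Δ \ Δ_x` and `M_x` is
the canonical matching on `Δ_x` (pairing `σ \ {x}` with `σ ∪ {x}`), then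
`M = M' ∪ M_x` is an acyclic matching on `Δ`. -/
theorem union_with_Mx_acyclic {X : Type*} [DecidableEq X]
    (Δ : Set (Finset X)) (x : X)
    (Δx : Set (Finset X))
    (hΔx : Δx = {σ ∈ Δ | σ.erase x ∈ Δ ∧ insert x σ ∈ Δ})
    (Mx : Set (Finset X × Finset X))
    (hMx : Mx = {p | ∃ σ : Finset X,
      p = (σ.erase x, insert x σ) ∧ σ.erase x ∈ Δ ∧ insert x σ ∈ Δ})
    (M' : Set (Finset X × Finset X))
    (hM' : IsPartialMatching (Δ \ Δx) M')
    (hM'acyclic : ¬ HasCycle M') :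
    IsPartialMatching Δ (M' ∪ Mx) ∧ ¬ HasCycle (M' ∪ Mx) := by
  obtain ⟨hM'1, hM'2⟩ := hM'
  -- basic facts about Mx pairs
  have hMxfst : ∀ p ∈ Mx, x ∉ p.1 ∧ p.2 = insert x p.1 := by
    rintro p hp
    rw [hMx] at hp
    obtain ⟨σ, rfl, h1, h2⟩ := hp
    refine ⟨Finset.notMem_erase _ _, ?_⟩
    simp only
    ext y
    simp only [Finset.mem_insert, Finset.mem_erase]
    tauto
  have hMxΔ : ∀ p ∈ Mx, p.1 ∈ Δx ∧ p.2 ∈ Δx := by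
    rintro p hp
    have hfx := hMxfst p hp
    rw [hMx] at hp
    obtain ⟨σ, hpσ, h1, h2⟩ := hp
    have e1 : p.1 = σ.erase x := by rw [hpσ]
    have e2 : p.2 = insert x σ := by rw [hpσ]
    rw [hΔx]
    constructor
    · refine ⟨by rw [e1]; exact h1, ?_, ?_⟩
      · rw [e1, Finset.erase_idem]; exact h1
      · rw [e1]
        have : insert x (σ.erase x) = insert x σ := by
          ext y; simp only [Finset.mem_insert, Finset.mem_erase]; tauto
        rw [this]; exact h2
    · refine ⟨by rw [e2]; exact h2, ?_, ?_⟩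
      · rw [e2]
        have : (insert x σ).erase x = σ.erase x := by
          ext y; simp only [Finset.mem_insert, Finset.mem_erase]; tauto
        rw [this]; exact h1
      · rw [e2, Finset.insert_idem]; exact h2
  have hMfaces : ∀ p ∈ M' ∪ Mx, p.1 ∈ Δ ∧ p.2 ∈ Δ ∧ p.1 ⋖ p.2 := by
    rintro p (hp | hp)
    · obtain ⟨h1, h2, h3⟩ := hM'1 p hp
      exact ⟨h1.1, h2.1, h3⟩
    · have hfx := hMxfst p hp
      have hΔp := hMxΔ p hp
      rw [hΔx] at hΔp
      refine ⟨hΔp.1.1, hΔp.2.1, ?_⟩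
      rw [hfx.2]
      exact Finset.covBy_insert hfx.1
  constructor
  · refine ⟨hMfaces, ?_⟩
    -- uniqueness
    rintro p hp q hq hshare
    have hdisj : ∀ r ∈ M', ∀ s ∈ Mx,
        r.1 ≠ s.1 ∧ r.1 ≠ s.2 ∧ r.2 ≠ s.1 ∧ r.2 ≠ s.2 := by
      intro r hr s hs
      obtain ⟨hr1, hr2, _⟩ := hM'1 r hr
      obtain ⟨hs1, hs2⟩ := hMxΔ s hs
      exact ⟨fun h => hr1.2 (h ▸ hs1), fun h => hr1.2 (h ▸ hs2),
        fun h => hr2.2 (h ▸ hs1), fun h => hr2.2 (h ▸ hs2)⟩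
    rcases hp with hp | hp <;> rcases hq with hq | hq
    · exact hM'2 p hp q hq hshare
    · rcases (hdisj p hp q hq) with ⟨h1, h2, h3, h4⟩; tauto
    · rcases (hdisj q hq p hp) with ⟨h1, h2, h3, h4⟩
      exact absurd hshare (by tauto)
    · -- both in Mx
      have hpf := hMxfst p hp
      have hqf := hMxfst q hq
      have key : p.1 = q.1 → p = q := by
        intro h
        have : p.2 = q.2 := by rw [hpf.2, hqf.2, h]
        exact Prod.ext h this
      rcases hshare with h | h | h | h
      · exact key h
      · exact absurd (h ▸ hqf.2 ▸ Finset.mem_insert_self x q.1 : x ∈ p.1)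
          hpf.1
      · exact absurd (h ▸ hpf.2 ▸ Finset.mem_insert_self x p.1 : x ∈ q.1)
          hqf.1
      · have h1 : p.1 = q.1 := by
          have := congrArg (fun s => Finset.erase s x) (hpf.2 ▸ hqf.2 ▸ h :
            insert x p.1 = insert x q.1)
          simpa [Finset.erase_insert hpf.1, Finset.erase_insert hqf.1] using this
        exact key h1
  · -- acyclicity
    rintro ⟨m, a, b, hinj, hmem, hcov⟩
    by_cases hA : ∃ j, x ∈ b j ∧ x ∉ a (j + 1)
    · obtain ⟨j, hxb, hxa⟩ := hA
      -- then a (j+1) = (b j).erase x and b j = insert x (a (j+1))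
      obtain ⟨y, hy, hyins⟩ := Finset.covBy_iff_exists_insert.mp (hcov j)
      have hxy : y = x := by
        rcases Finset.mem_insert.mp (hyins ▸ hxb) with h | h
        · exact h.symm
        · exact absurd h hxa
      subst hxy
      -- edge j cannot be in Mx
      have hj : (a j, b j) ∈ M' := by
        rcases hmem j with h | h
        · exact h
        · exfalso
          have hf := hMxfst _ h
          have hf2 : b j = insert y (a j) := hf.2
          have hf1 : y ∉ a j := hf.1
          have : a (j + 1) = a j := by
            have := congrArg (fun s => Finset.erase s y) hyins
            simp only [Finset.erase_insert hy] at this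
            rw [this, hf2, Finset.erase_insert hf1]
          have : j + 1 = j := hinj this
          have := congrArg (fun k => k - j) this
          simp [add_sub_cancel_right, sub_self] at this
      -- but then b j ∈ Δx, contradiction
      have hbj := (hM'1 _ hj).2.1
      apply hbj.2
      rw [hΔx]
      refine ⟨hbj.1, ?_, ?_⟩
      · have : (b j).erase y = a (j + 1) := by
          rw [← hyins, Finset.erase_insert hy]
        rw [this]
        exact (hMfaces _ (hmem (j + 1))).1
      · rw [Finset.insert_eq_self.mpr hxb]
        exact hbj.1
    · push_neg at hA
      -- case B: x ∈ b j → x ∈ a (j+1) for all j; show all edges in M'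
      have hstep : ∀ i, x ∈ a i → x ∈ a (i + 1) := by
        intro i hx
        have hi : (a i, b i) ∈ M' := by
          rcases hmem i with h | h
          · exact h
          · exact absurd hx (hMxfst _ h).1
        have : x ∈ b i := (hM'1 _ hi).2.2.1.le hx
        exact hA i this
      have hall : ∀ i, (a i, b i) ∈ M' := by
        intro i
        rcases hmem i with h | h
        · exact h
        · exfalso
          have hf := hMxfst _ h
          have hf2 : b i = insert x (a i) := hf.2
          have hxb : x ∈ b i := hf2 ▸ Finset.mem_insert_self x (a i)
          have hx1 : x ∈ a (i + 1) := hA i hxb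
          -- propagate around the cycle back to a i
          open Fin.NatCast in
          have hprop : ∀ n : ℕ, x ∈ a (i + 1 + (n : Fin (m + 2))) := by
            intro n
            induction n with
            | zero => simpa using hx1
            | succ k ih =>
              have : ((k + 1 : ℕ) : Fin (m + 2)) = (k : Fin (m + 2)) + 1 := by
                push_cast; ring
              rw [this, ← add_assoc]
              exact hstep _ ih
          open Fin.NatCast in
          have : x ∈ a i := by
            have := hprop ((i - (i + 1)).val)
            rwa [Fin.cast_val_eq_self, add_sub_cancel] at this
          exact hf.1 this
      exact hM'acyclic ⟨m, a, b, hinj, hall, hcov⟩
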